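/- Define K_{SO(2n+1)}(x,y) := s_{2n}(x−y) − s_{2n}(x+y), where s_m(t) := sin(πmt)/sin(πt) (extended by continuity, with s_m(0) = m). There is an absolute constant C > 0 such that for every integer n ≥ 1 and every interval I ⊆ [0, 1/2]: (i) | ∫_I K_{SO(2n+1)}(x,x) dx − 2n·|I| | ≤ C, and (ii) ∫_{[0,1/2]∖I} ∫_I K_{SO(2n+1)}(x,y)² dx dy ≤ C·log(2 + 2n·|I|). -/

import Mathlib

open Real MeasureTheory

/-- `sKer m t = sin (π m t) / sin (π t)`, extended by continuity where `sin (π t) = 0`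
(at an integer `t = k` the continuous extension has value `m·cos(πmk)/cos(πk)`, which equals
`m·cos(πmt)·cos(πt)` there; in particular `sKer m 0 = m`). -/
noncomputable def sKer (m : ℕ) (t : ℝ) : ℝ :=
  if Real.sin (π * t) = 0 then (m : ℝ) * Real.cos (π * m * t) * Real.cos (π * t)
  else Real.sin (π * m * t) / Real.sin (π * t)

/-- The determinantal kernel of the nontrivial eigenangles of a Haar-random matrix in
`SO(2n+1)`: `K_{SO(2n+1)}(x,y) = s_{2n}(x−y) − s_{2n}(x+y)`. -/
noncomputable def KSOOdd (n : ℕ) (x y : ℝ) : ℝ :=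
  sKer (2 * n) (x - y) - sKer (2 * n) (x + y)

lemma sin_even_sum (n : ℕ) (t : ℝ) :
    Real.sin (π * (2 * n : ℕ) * t)
      = (2 * ∑ k ∈ Finset.range n, Real.cos ((2 * k + 1) * π * t)) * Real.sin (π * t) := by
  induction n with
  | zero => simp
  | succ n ih =>
    rw [Finset.sum_range_succ]
    have key : Real.sin (π * (2 * (n+1) : ℕ) * t) - Real.sin (π * (2 * n : ℕ) * t)
        = 2 * Real.sin (π * t) * Real.cos ((2 * n + 1) * π * t) := by
      have h := Real.sin_sub_sin (π * (2 * (n+1) : ℕ) * t) (π * (2 * n : ℕ) * t)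
      have h2 : (π * (2 * (n+1) : ℕ) * t - π * (2 * n : ℕ) * t) / 2 = π * t := by
        push_cast; ring
      have h3 : (π * (2 * (n+1) : ℕ) * t + π * (2 * n : ℕ) * t) / 2 = (2 * n + 1) * π * t := by
        push_cast; ring
      rw [h2, h3] at h
      linarith
    push_cast at key ih ⊢
    nlinarith [key, ih]

lemma sKer_two (n : ℕ) (t : ℝ) :
    sKer (2 * n) t = 2 * ∑ k ∈ Finset.range n, Real.cos ((2 * k + 1) * π * t) := by
  unfold sKer
  rcases eq_or_ne (Real.sin (π * t)) 0 with h | h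
  · rw [if_pos h]
    obtain ⟨j, hj⟩ := Real.sin_eq_zero_iff.1 h
    have hπ : (π : ℝ) ≠ 0 := Real.pi_ne_zero
    have ht : t = (j : ℝ) := by
      have h0 : π * (t - (j : ℝ)) = 0 := by linarith
      rcases mul_eq_zero.1 h0 with h' | h'
      · exact absurd h' hπ
      · linarith
    subst ht
    have hc1 : Real.cos (π * (2 * n : ℕ) * (j : ℝ)) = 1 := by
      have : π * (2 * n : ℕ) * (j : ℝ) = ((n * j : ℤ) : ℝ) * (2 * π) := by push_cast; ring
      rw [this, Real.cos_int_mul_two_pi]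
    have hc2 : ∀ k : ℕ, Real.cos ((2 * k + 1) * π * (j : ℝ)) = Real.cos (π * j) := by
      intro k
      have : ((2 * k + 1) : ℝ) * π * (j : ℝ) = π * j + ((k * j : ℤ) : ℝ) * (2 * π) := by
        push_cast; ring
      rw [this, Real.cos_add_int_mul_two_pi]
    rw [hc1]
    rw [Finset.sum_congr rfl fun k _ => hc2 k, Finset.sum_const, Finset.card_range]
    push_cast
    ring
  · rw [if_neg h, sin_even_sum n t]
    field_simp
    exact Finset.sum_congr rfl fun k _ => by congr 1; ring

lemma continuous_sKer_two (n : ℕ) : Continuous (sKer (2 * n)) := by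
  have h : sKer (2 * n) = fun t => 2 * ∑ k ∈ Finset.range n, Real.cos ((2 * k + 1) * π * t) :=
    funext (sKer_two n)
  rw [h]
  refine continuous_const.mul (continuous_finset_sum _ fun k _ => ?_)
  exact Real.continuous_cos.comp (continuous_const.mul continuous_id)

lemma continuous_KSOOdd (n : ℕ) : Continuous fun p : ℝ × ℝ => KSOOdd n p.1 p.2 := by
  unfold KSOOdd
  exact ((continuous_sKer_two n).comp (continuous_fst.sub continuous_snd)).sub
    ((continuous_sKer_two n).comp (continuous_fst.add continuous_snd))

lemma abs_sKer_le (n : ℕ) (t : ℝ) : |sKer (2 * n) t| ≤ 2 * n := by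
  rw [sKer_two]
  calc |2 * ∑ k ∈ Finset.range n, Real.cos ((2 * k + 1) * π * t)|
      = 2 * |∑ k ∈ Finset.range n, Real.cos ((2 * k + 1) * π * t)| := by
        rw [abs_mul]; norm_num
    _ ≤ 2 * ∑ k ∈ Finset.range n, |Real.cos ((2 * k + 1) * π * t)| := by
        gcongr; exact Finset.abs_sum_le_sum_abs _ _
    _ ≤ 2 * ∑ k ∈ Finset.range n, 1 := by
        gcongr with k hk; exact Real.abs_cos_le_one _
    _ = 2 * n := by simp

lemma abs_sKer_le_inv_sin (n : ℕ) {t : ℝ} (h : Real.sin (π * t) ≠ 0) :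
    |sKer (2 * n) t| ≤ 1 / |Real.sin (π * t)| := by
  unfold sKer
  rw [if_neg h, abs_div]
  have h2 : 0 < |Real.sin (π * t)| := abs_pos.2 h
  gcongr
  exact Real.abs_sin_le_one _

lemma sin_pi_lb {t : ℝ} (h0 : 0 ≤ t) (h1 : t ≤ 1 / 2) : 2 * t ≤ Real.sin (π * t) := by
  have hπ := Real.pi_pos
  have h := Real.mul_le_sin (x := π * t) (by positivity) (by nlinarith)
  have h2 : 2 / π * (π * t) = 2 * t := by field_simp
  linarith [h2 ▸ h]

lemma abs_sKer_le_of_sin_ge (n : ℕ) {t δ : ℝ} (hδ : 0 < δ) (h : 2 * δ ≤ |Real.sin (π * t)|) :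
    |sKer (2 * n) t| ≤ 1 / (2 * δ) := by
  have hne : Real.sin (π * t) ≠ 0 := by
    intro h0; rw [h0, abs_zero] at h; linarith
  refine (abs_sKer_le_inv_sin n hne).trans ?_
  have h2 : (0:ℝ) < 2 * δ := by linarith
  gcongr


lemma abs_sin_pi_ge {u : ℝ} (h : |u| ≤ 1 / 2) : 2 * |u| ≤ |Real.sin (π * u)| := by
  rcases abs_cases u with ⟨h1, h2⟩ | ⟨h1, h2⟩
  · rw [h1]
    have := sin_pi_lb h2 (h1 ▸ h)
    exact this.trans (le_abs_self _)
  · rw [h1]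
    have h3 : 0 ≤ -u := by linarith
    have := sin_pi_lb h3 (h1 ▸ h)
    have h4 : Real.sin (π * -u) = -Real.sin (π * u) := by
      rw [show π * -u = -(π * u) by ring, Real.sin_neg]
    rw [h4] at this
    calc 2 * -u ≤ -Real.sin (π * u) := this
      _ ≤ |(-Real.sin (π * u))| := le_abs_self _
      _ = |Real.sin (π * u)| := abs_neg _

lemma sin_pi_add_ge {x y : ℝ} (hx0 : 0 ≤ x) (hx1 : x ≤ 1 / 2)
    (hy0 : 0 ≤ y) (hy1 : y ≤ 1 / 2) :
    2 * |x - y| ≤ |Real.sin (π * (x + y))| := by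
  set δ := |x - y| with hδ
  have hd1 : δ ≤ x + y := by
    rcases abs_cases (x - y) with ⟨h1, _⟩ | ⟨h1, _⟩ <;> rw [hδ, h1] <;> linarith
  have hd2 : δ ≤ 1 - (x + y) := by
    rcases abs_cases (x - y) with ⟨h1, _⟩ | ⟨h1, _⟩ <;> rw [hδ, h1] <;> linarith
  rcases le_or_gt (x + y) (1 / 2) with h | h
  · have := sin_pi_lb (by linarith : (0:ℝ) ≤ x + y) h
    exact le_trans (by linarith) (this.trans (le_abs_self _))
  · have h1 : (0:ℝ) ≤ 1 - (x + y) := by linarith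
    have h2 : 1 - (x + y) ≤ 1 / 2 := by linarith
    have := sin_pi_lb h1 h2
    have h3 : Real.sin (π * (1 - (x + y))) = Real.sin (π * (x + y)) := by
      rw [show π * (1 - (x + y)) = π - π * (x + y) by ring, Real.sin_pi_sub]
    rw [h3] at this
    exact le_trans (by linarith) (this.trans (le_abs_self _))

lemma K_sq_le (n : ℕ) {x y : ℝ} (hx0 : 0 ≤ x) (hx1 : x ≤ 1 / 2)
    (hy0 : 0 ≤ y) (hy1 : y ≤ 1 / 2) (hxy : x ≠ y) :
    (KSOOdd n x y) ^ 2 ≤ 8 * (2 * n : ℝ) ^ 2 / (1 + (2 * (2 * n : ℝ) * (x - y)) ^ 2) := by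
  set m : ℝ := (2 * n : ℝ) with hm
  have hm0 : (0:ℝ) ≤ m := by positivity
  set δ : ℝ := |x - y| with hδdef
  have hδ : 0 < δ := abs_pos.2 (sub_ne_zero.2 hxy)
  have hδle : δ ≤ 1 / 2 := by
    rw [hδdef, abs_sub_le_iff]; constructor <;> linarith
  have h1 : |sKer (2 * n) (x - y)| ≤ 1 / (2 * δ) :=
    abs_sKer_le_of_sin_ge n hδ (abs_sin_pi_ge hδle)
  have h2 : |sKer (2 * n) (x + y)| ≤ 1 / (2 * δ) :=
    abs_sKer_le_of_sin_ge n hδ (sin_pi_add_ge hx0 hx1 hy0 hy1)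
  have h1' : |sKer (2 * n) (x - y)| ≤ m := abs_sKer_le n _
  have h2' : |sKer (2 * n) (x + y)| ≤ m := abs_sKer_le n _
  have hK : |KSOOdd n x y| ≤ 2 * min m (1 / (2 * δ)) := by
    unfold KSOOdd
    refine (abs_sub _ _).trans ?_
    have := min_le_left m (1 / (2 * δ))
    have := min_le_right m (1 / (2 * δ))
    rcases le_total m (1 / (2 * δ)) with h | h
    · rw [min_eq_left h]; linarith
    · rw [min_eq_right h]; linarith
  have hKsq : (KSOOdd n x y) ^ 2 ≤ 4 * (min m (1 / (2 * δ))) ^ 2 := by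
    have h0 : 0 ≤ min m (1 / (2 * δ)) := le_min hm0 (by positivity)
    nlinarith [abs_nonneg (KSOOdd n x y), sq_abs (KSOOdd n x y), hK]
  refine hKsq.trans ?_
  have hδsq : (x - y) ^ 2 = δ ^ 2 := (sq_abs _).symm
  rw [show (2 * m * (x - y)) ^ 2 = 4 * m ^ 2 * (x - y) ^ 2 by ring, hδsq]
  have hden : (0:ℝ) < 1 + 4 * m ^ 2 * δ ^ 2 := by positivity
  rcases le_total (2 * m * δ) 1 with h | h
  · rw [min_eq_left (by
      have : m ≤ 1 / (2 * δ) ↔ m * (2 * δ) ≤ 1 := by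
        rw [le_div_iff₀ (by linarith)]
      rw [this]; linarith [h])]
    rw [le_div_iff₀ hden]
    have key : (2 * m * δ) ^ 2 ≤ 1 := by nlinarith [mul_nonneg hm0 hδ.le]
    nlinarith [sq_nonneg m, key]
  · rw [min_eq_right (by
      have : 1 / (2 * δ) ≤ m ↔ 1 ≤ m * (2 * δ) := by
        rw [div_le_iff₀ (by linarith)]
      rw [this]; linarith [h])]
    rw [le_div_iff₀ hden]
    have hx2 : 1 / (2 * δ) ^ 2 = (1 / (2*δ))^2 := by ring
    have h2δ : (0:ℝ) < 2 * δ := by linarith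
    have : 4 * (1 / (2 * δ)) ^ 2 * (1 + 4 * m ^ 2 * δ ^ 2) = (1 + 4*m^2*δ^2) / (δ^2) := by
      field_simp; ring
    rw [this]
    rw [div_le_iff₀ (by positivity)]
    nlinarith []

lemma abel_aux (c a : ℕ → ℝ) (hc : ∀ k, |c k| ≤ 1) (ha : ∀ k, 0 ≤ a k)
    (hmono : ∀ k, a (k + 1) ≤ a k) (K : ℕ) :
    ∀ N, K ≤ N →
      |(∑ k ∈ Finset.Ico K N, (c k - c (k + 1)) * a k) - c K * a K + c N * a N|
        ≤ a K - a N := by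
  intro N hN
  induction N, hN using Nat.le_induction with
  | base => simp
  | succ N hKN ih =>
    rw [Finset.sum_Ico_succ_top hKN]
    have hrw : (∑ k ∈ Finset.Ico K N, (c k - c (k + 1)) * a k) + (c N - c (N + 1)) * a N
          - c K * a K + c (N + 1) * a (N + 1)
        = ((∑ k ∈ Finset.Ico K N, (c k - c (k + 1)) * a k) - c K * a K + c N * a N)
          + (c (N + 1) * (a (N + 1) - a N)) := by ring
    rw [hrw]
    have h1 : |c (N + 1) * (a (N + 1) - a N)| ≤ a N - a (N + 1) := by
      rw [abs_mul]
      have : |a (N + 1) - a N| = a N - a (N + 1) := by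
        rw [abs_sub_comm, abs_of_nonneg (by linarith [hmono N])]
      rw [this]
      nlinarith [abs_nonneg (c (N+1)), hc (N+1), hmono N]
    calc |_ + _| ≤ _ := abs_add_le _ _
      _ ≤ (a K - a N) + (a N - a (N + 1)) := add_le_add ih h1
      _ = a K - a (N + 1) := by ring

lemma abel_bound (c a : ℕ → ℝ) (hc : ∀ k, |c k| ≤ 1) (ha : ∀ k, 0 ≤ a k)
    (hmono : ∀ k, a (k + 1) ≤ a k) (K N : ℕ) :
    |∑ k ∈ Finset.Ico K N, (c k - c (k + 1)) * a k| ≤ 2 * a K := by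
  rcases le_or_gt K N with h | h
  · have haN : a N ≤ a K := (antitone_nat_of_succ_le hmono) h
    have h1 := abel_aux c a hc ha hmono K N h
    have h2 : |c K * a K| ≤ a K := by
      rw [abs_mul, abs_of_nonneg (ha K)]
      nlinarith [hc K, ha K, abs_nonneg (c K)]
    have h3 : |c N * a N| ≤ a N := by
      rw [abs_mul, abs_of_nonneg (ha N)]
      nlinarith [hc N, ha N, abs_nonneg (c N)]
    have e : (∑ k ∈ Finset.Ico K N, (c k - c (k + 1)) * a k)
        = (((∑ k ∈ Finset.Ico K N, (c k - c (k + 1)) * a k) - c K * a K + c N * a N)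
            + c K * a K) - c N * a N := by ring
    rw [e]
    refine le_trans (abs_sub _ _) ?_
    refine le_trans (add_le_add ((abs_add_le _ _).trans (add_le_add h1 h2)) h3) ?_
    linarith [ha N]
  · rw [Finset.Ico_eq_empty (by omega), Finset.sum_empty, abs_zero]
    linarith [ha K]

lemma sin_odd_telescope (k : ℕ) (θ : ℝ) :
    Real.cos (2 * k * θ) - Real.cos (2 * (k + 1) * θ)
      = 2 * Real.sin ((2 * k + 1) * θ) * Real.sin θ := by
  have h := Real.cos_sub_cos (2 * k * θ) (2 * (k + 1) * θ)
  have h1 : (2 * k * θ + 2 * (k + 1) * θ) / 2 = (2 * k + 1) * θ := by ring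
  have h2 : (2 * k * θ - 2 * (k + 1) * θ) / 2 = -θ := by ring
  rw [h1, h2, Real.sin_neg] at h
  linarith

lemma G_bound (n : ℕ) {θ : ℝ} (h0 : 0 ≤ θ) (hh : θ ≤ π / 2) :
    |∑ k ∈ Finset.range n, Real.sin ((2 * k + 1) * θ) / (2 * k + 1)| ≤ 4 := by
  rcases eq_or_lt_of_le h0 with h0' | h0'
  · simp [← h0']
  set K := min n ⌈θ⁻¹⌉₊ with hK
  have hKn : K ≤ n := min_le_left _ _
  rw [← Finset.sum_range_add_sum_Ico _ hKn]
  have hhead : |∑ k ∈ Finset.range K, Real.sin ((2 * k + 1) * θ) / (2 * k + 1)|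
      ≤ 1 + π / 2 := by
    refine (Finset.abs_sum_le_sum_abs _ _).trans ?_
    have hterm : ∀ k ∈ Finset.range K, |Real.sin ((2 * k + 1) * θ) / (2 * k + 1)| ≤ θ := by
      intro k _
      rw [abs_div]
      have hk1 : (0:ℝ) < 2 * k + 1 := by positivity
      rw [abs_of_pos hk1, div_le_iff₀ hk1]
      calc |Real.sin ((2 * k + 1) * θ)| ≤ |(2 * k + 1) * θ| := Real.abs_sin_le_abs
        _ = (2 * k + 1) * θ := abs_of_nonneg (by positivity)
        _ = θ * (2 * k + 1) := by ring
    refine (Finset.sum_le_sum hterm).trans ?_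
    rw [Finset.sum_const, Finset.card_range, nsmul_eq_mul]
    have hceil : (K : ℝ) ≤ ⌈θ⁻¹⌉₊ := by exact_mod_cast Nat.cast_le.2 (min_le_right _ _)
    have hceil2 : (⌈θ⁻¹⌉₊ : ℝ) < θ⁻¹ + 1 := Nat.ceil_lt_add_one (by positivity)
    have : (K : ℝ) * θ ≤ (θ⁻¹ + 1) * θ := by
      apply mul_le_mul_of_nonneg_right _ h0
      linarith
    have hinv : (θ⁻¹ + 1) * θ = 1 + θ := by field_simp
    linarith
  have htail : |∑ k ∈ Finset.Ico K n, Real.sin ((2 * k + 1) * θ) / (2 * k + 1)|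
      ≤ π / 4 := by
    rcases le_or_gt n K with h | h
    · rw [Finset.Ico_eq_empty (by omega), Finset.sum_empty, abs_zero]; positivity
    -- here K = ⌈θ⁻¹⌉₊ and K ≥ θ⁻¹
    have hKeq : K = ⌈θ⁻¹⌉₊ := by
      rcases min_cases n ⌈θ⁻¹⌉₊ with ⟨h1, h2⟩ | ⟨h1, h2⟩
      · omega
      · exact h1
    have hKge : θ⁻¹ ≤ (K : ℝ) := by rw [hKeq]; exact Nat.le_ceil _
    have hsin : 0 < Real.sin θ := Real.sin_pos_of_pos_of_lt_pi h0'
      (lt_of_le_of_lt hh (by linarith [Real.pi_pos]))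
    have hsinlb : 2 / π * θ ≤ Real.sin θ := Real.mul_le_sin h0 hh
    set cc : ℕ → ℝ := fun k => Real.cos (2 * k * θ) with hcc
    set aa : ℕ → ℝ := fun k => (2 * (k:ℝ) + 1)⁻¹ with haa
    have hrw : ∀ k ∈ Finset.Ico K n,
        Real.sin ((2 * k + 1) * θ) / (2 * k + 1)
          = (1 / (2 * Real.sin θ)) * ((cc k - cc (k + 1)) * aa k) := by
      intro k _
      have hck : cc k - cc (k + 1) = 2 * Real.sin ((2 * k + 1) * θ) * Real.sin θ := by
        simp only [hcc]
        push_cast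
        exact sin_odd_telescope k θ
      rw [hck]
      simp only [haa]
      field_simp
    rw [Finset.sum_congr rfl hrw, ← Finset.mul_sum]
    rw [abs_mul]
    have habel := abel_bound cc aa
      (fun k => Real.abs_cos_le_one _) (fun k => by positivity)
      (fun k => by
        simp only [haa]
        apply inv_anti₀ (by positivity)
        push_cast; linarith) K n
    have h2K : (2:ℝ) / θ ≤ 2 * K + 1 := by
      have : (2:ℝ) / θ = 2 * θ⁻¹ := by rw [div_eq_mul_inv]
      rw [this]; linarith
    have habs1 : |1 / (2 * Real.sin θ)| = 1 / (2 * Real.sin θ) := abs_of_pos (by positivity)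
    rw [habs1]
    have haaK : aa K = (2 * (K:ℝ) + 1)⁻¹ := rfl
    rw [haaK] at habel
    refine le_trans (mul_le_mul_of_nonneg_left habel (by positivity)) ?_
    -- 1/(2 sinθ) * (2 * (2K+1)⁻¹) ≤ π/4
    have hθpos := h0'
    have hπ := Real.pi_pos
    have hsinθ : 2 * θ / π ≤ Real.sin θ := by
      have : 2 / π * θ = 2 * θ / π := by ring
      linarith [this ▸ hsinlb]
    have hK1 : (0:ℝ) < 2 * K + 1 := by positivity
    have hkey : (2 * (K:ℝ) + 1)⁻¹ ≤ θ / 2 := by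
      have h' := inv_anti₀ (by positivity : (0:ℝ) < 2 / θ) h2K
      rwa [inv_div] at h'
    have heq : 1 / (2 * Real.sin θ) * (2 * (2 * (K:ℝ) + 1)⁻¹)
        = (2 * (K:ℝ) + 1)⁻¹ / Real.sin θ := by
      field_simp
    rw [heq]
    calc (2 * (K:ℝ) + 1)⁻¹ / Real.sin θ ≤ (θ / 2) / (2 * θ / π) := by
          apply div_le_div₀ (by positivity) hkey (by positivity) hsinθ
      _ = π / 4 := by field_simp; ring
  calc |_ + _| ≤ _ := abs_add_le _ _
    _ ≤ (1 + π / 2) + π / 4 := add_le_add hhead htail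
    _ ≤ 4 := by nlinarith [Real.pi_le_four]

lemma G_bound' (n : ℕ) {θ : ℝ} (h0 : 0 ≤ θ) (hπ : θ ≤ π) :
    |∑ k ∈ Finset.range n, Real.sin ((2 * k + 1) * θ) / (2 * k + 1)| ≤ 4 := by
  rcases le_or_gt θ (π / 2) with h | h
  · exact G_bound n h0 h
  · have key : ∀ k : ℕ, Real.sin ((2 * (k:ℝ) + 1) * θ) = Real.sin ((2 * (k:ℝ) + 1) * (π - θ)) := by
      intro k
      have harg : ((2 * (k:ℝ) + 1)) * (π - θ) = (π - (2 * (k:ℝ) + 1) * θ) + k * (2 * π) := by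
        ring
      rw [harg, Real.sin_add_nat_mul_two_pi, Real.sin_pi_sub]
    have hsum : ∀ k ∈ Finset.range n,
        Real.sin ((2 * (k:ℝ) + 1) * θ) / (2 * (k:ℝ) + 1)
          = Real.sin ((2 * (k:ℝ) + 1) * (π - θ)) / (2 * (k:ℝ) + 1) := by
      intro k _; rw [key k]
    rw [Finset.sum_congr rfl hsum]
    exact G_bound n (by linarith) (by linarith)

lemma integral_term (k : ℕ) (a b : ℝ) :
    ∫ x in a..b, (2 - 2 * Real.cos ((2 * (k:ℝ) + 1) * π * (2 * x)))
      = 2 * (b - a) - (Real.sin ((2 * (k:ℝ) + 1) * (2 * π * b))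
          - Real.sin ((2 * (k:ℝ) + 1) * (2 * π * a))) / ((2 * (k:ℝ) + 1) * π) := by
  set c : ℝ := (2 * (k:ℝ) + 1) * 2 * π with hc
  have hc0 : c ≠ 0 := by positivity
  have hcont : Continuous fun x : ℝ => Real.cos (c * x) :=
    Real.continuous_cos.comp (continuous_const.mul continuous_id)
  have harg : ∀ x : ℝ, (2 * (k:ℝ) + 1) * π * (2 * x) = c * x := by intro x; rw [hc]; ring
  have h1 : ∫ x in a..b, (2 - 2 * Real.cos ((2 * (k:ℝ) + 1) * π * (2 * x)))
      = ∫ x in a..b, (2 - 2 * Real.cos (c * x)) := by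
    simp only [harg]
  rw [h1]
  have h2 : IntervalIntegrable (fun x : ℝ => 2 * Real.cos (c * x)) volume a b :=
    (continuous_const.mul hcont).intervalIntegrable a b
  rw [intervalIntegral.integral_sub (intervalIntegrable_const) h2]
  rw [intervalIntegral.integral_const]
  rw [intervalIntegral.integral_const_mul]
  rw [intervalIntegral.integral_comp_mul_left (fun x => Real.cos x) hc0]
  rw [integral_cos]
  have e1 : c * b = (2 * (k:ℝ) + 1) * (2 * π * b) := by rw [hc]; ring
  have e2 : c * a = (2 * (k:ℝ) + 1) * (2 * π * a) := by rw [hc]; ring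
  rw [e1, e2]
  rw [smul_eq_mul, smul_eq_mul]
  have hk1 : ((2 * (k:ℝ) + 1) * π) ≠ 0 := by positivity
  field_simp
  ring

lemma part_i (n : ℕ) {a b : ℝ} (ha : 0 ≤ a) (hab : a ≤ b) (hb : b ≤ 1 / 2) :
    |(∫ x in a..b, KSOOdd n x x) - 2 * (n:ℝ) * (b - a)| ≤ 3 := by
  have hKxx : ∀ x : ℝ, KSOOdd n x x
      = ∑ k ∈ Finset.range n, (2 - 2 * Real.cos ((2 * (k:ℝ) + 1) * π * (2 * x))) := by
    intro x
    unfold KSOOdd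
    rw [show x - x = (0:ℝ) by ring, show x + x = 2 * x by ring, sKer_two, sKer_two]
    have h0 : ∀ k ∈ Finset.range n, Real.cos ((2 * (k:ℝ) + 1) * π * 0) = 1 := by
      intro k _; rw [mul_zero, Real.cos_zero]
    rw [Finset.sum_congr rfl h0, Finset.sum_const, Finset.card_range]
    rw [Finset.sum_sub_distrib, Finset.sum_const, Finset.card_range, ← Finset.mul_sum]
    push_cast
    ring
  simp only [hKxx]
  have hint : ∀ k ∈ Finset.range n, IntervalIntegrable
      (fun x : ℝ => 2 - 2 * Real.cos ((2 * (k:ℝ) + 1) * π * (2 * x))) volume a b := by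
    intro k _
    apply Continuous.intervalIntegrable
    fun_prop
  rw [intervalIntegral.integral_finset_sum hint]
  rw [Finset.sum_congr rfl (fun k _ => integral_term k a b)]
  rw [Finset.sum_sub_distrib, Finset.sum_const, Finset.card_range, nsmul_eq_mul]
  have hterm : ∀ k ∈ Finset.range n,
      (Real.sin ((2 * (k:ℝ) + 1) * (2 * π * b)) - Real.sin ((2 * (k:ℝ) + 1) * (2 * π * a)))
          / ((2 * (k:ℝ) + 1) * π)
        = (1 / π) * (Real.sin ((2 * (k:ℝ) + 1) * (2 * π * b)) / (2 * (k:ℝ) + 1)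
            - Real.sin ((2 * (k:ℝ) + 1) * (2 * π * a)) / (2 * (k:ℝ) + 1)) := by
    intro k _
    rw [div_sub_div_same, div_mul_div_comm, one_mul, mul_comm π]
  rw [Finset.sum_congr rfl hterm, ← Finset.mul_sum, Finset.sum_sub_distrib]
  set Sb := ∑ k ∈ Finset.range n, Real.sin ((2 * (k:ℝ) + 1) * (2 * π * b)) / (2 * (k:ℝ) + 1)
    with hSbdef
  set Sa := ∑ k ∈ Finset.range n, Real.sin ((2 * (k:ℝ) + 1) * (2 * π * a)) / (2 * (k:ℝ) + 1)
    with hSadef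
  have hπ := Real.pi_pos
  have hb0 : 0 ≤ b := ha.trans hab
  have hGb : |Sb| ≤ 4 := G_bound' n (mul_nonneg (by positivity) hb0) (by nlinarith)
  have hGa : |Sa| ≤ 4 := G_bound' n (mul_nonneg (by positivity) ha) (by nlinarith)
  have hexp : (n:ℝ) * (2 * (b - a)) - 1 / π * (Sb - Sa) - 2 * (n:ℝ) * (b - a)
      = (1 / π) * (Sa - Sb) := by ring
  rw [hexp, abs_mul]
  have h8 : |Sa - Sb| ≤ 8 := (abs_sub _ _).trans (by linarith)
  have h1π : |1 / π| = 1 / π := abs_of_pos (by positivity)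
  rw [h1π]
  have hπ3 : (3:ℝ) < π := Real.pi_gt_three
  have : 1 / π * |Sa - Sb| ≤ 1 / π * 8 := by
    apply mul_le_mul_of_nonneg_left h8 (by positivity)
  refine this.trans ?_
  rw [div_mul_eq_mul_div, one_mul]
  rw [div_le_iff₀ (by positivity)]
  linarith

lemma arctan_le_self' {z : ℝ} (hz : 0 ≤ z) : Real.arctan z ≤ z := by
  rcases eq_or_lt_of_le hz with h | h
  · rw [← h, Real.arctan_zero]
  · have h1 : 0 < Real.arctan z := by
      rw [← Real.arctan_zero]
      exact Real.arctan_strictMono h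
    have h2 := Real.lt_tan h1 (Real.arctan_lt_pi_div_two z)
    rw [Real.tan_arctan] at h2
    exact h2.le

lemma arctan_sub_le {p q : ℝ} (hq : 0 ≤ q) (hpq : q ≤ p) :
    Real.arctan p - Real.arctan q ≤ (p - q) / (1 + p * q) := by
  have hp : 0 ≤ p := hq.trans hpq
  have hden : (0:ℝ) < 1 + p * q := by nlinarith
  have h : Real.arctan p - Real.arctan q = Real.arctan ((p - q) / (1 + p * q)) := by
    have hxy : p * (-q) < 1 := by nlinarith
    have := Real.arctan_add (x := p) (y := -q) hxy
    rw [Real.arctan_neg] at this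
    rw [show p + -q = p - q by ring, show 1 - p * -q = 1 + p * q by ring] at this
    linarith
  rw [h]
  exact arctan_le_self' (div_nonneg (by linarith) hden.le)

lemma arctan_gap_le_pi_div_two {p q : ℝ} (hq : 0 ≤ q) :
    Real.arctan p - Real.arctan q ≤ π / 2 := by
  have h1 := Real.arctan_lt_pi_div_two p
  have h2 : 0 ≤ Real.arctan q := by
    rw [← Real.arctan_zero]; exact Real.arctan_strictMono.monotone hq
  linarith

lemma arctan_gap_le_inv {w : ℝ} (hw : 0 < w) (p : ℝ) :
    Real.arctan p - Real.arctan w ≤ w⁻¹ := by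
  have h1 := Real.arctan_lt_pi_div_two p
  have h2 : π / 2 - Real.arctan w = Real.arctan w⁻¹ := (Real.arctan_inv_of_pos hw).symm
  have h3 : Real.arctan w⁻¹ ≤ w⁻¹ := arctan_le_self' (by positivity)
  linarith

/-- Core calculus estimate. -/
lemma lemE {M L T : ℝ} (hM : 2 ≤ M) (hL : 0 ≤ L) (hT : 0 ≤ T) :
    ∫ w in (0:ℝ)..T, (Real.arctan (M * (w + L)) - Real.arctan (M * w))
      ≤ M⁻¹ * (π / 2 + Real.log (1 + M * L) + 1) := by
  have hM0 : (0:ℝ) < M := by linarith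
  have hπ := Real.pi_pos
  have hlog : 0 ≤ Real.log (1 + M * L) := Real.log_nonneg (by nlinarith)
  rcases eq_or_lt_of_le hT with hT0 | hT0
  · rw [← hT0, intervalIntegral.integral_same]
    positivity
  set f : ℝ → ℝ := fun w => Real.arctan (M * (w + L)) - Real.arctan (M * w) with hf
  have hfc : Continuous f := by
    apply Continuous.sub
    · exact Real.continuous_arctan.comp (continuous_const.mul (continuous_id.add continuous_const))
    · exact Real.continuous_arctan.comp (continuous_const.mul continuous_id)
  set w1 : ℝ := M⁻¹ with hw1
  set w2 : ℝ := L + M⁻¹ with hw2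
  set c1 : ℝ := min T w1 with hc1
  set c2 : ℝ := min T w2 with hc2
  have hw10 : 0 < w1 := by positivity
  have hw20 : 0 < w2 := by positivity
  have hw12 : w1 ≤ w2 := by rw [hw1, hw2]; linarith
  have hc10 : 0 < c1 := lt_min hT0 hw10
  have hc12 : c1 ≤ c2 := min_le_min le_rfl hw12
  have hc2T : c2 ≤ T := min_le_left _ _
  have hsplit : ∫ w in (0:ℝ)..T, f w
      = (∫ w in (0:ℝ)..c1, f w) + (∫ w in c1..c2, f w) + (∫ w in c2..T, f w) := by
    rw [intervalIntegral.integral_add_adjacent_intervals (hfc.intervalIntegrable _ _)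
      (hfc.intervalIntegrable _ _),
      intervalIntegral.integral_add_adjacent_intervals (hfc.intervalIntegrable _ _)
      (hfc.intervalIntegrable _ _)]
  rw [hsplit]
  -- piece 1
  have hP1 : (∫ w in (0:ℝ)..c1, f w) ≤ M⁻¹ * (π / 2) := by
    have hb : ∀ w ∈ Set.Icc (0:ℝ) c1, f w ≤ π / 2 := by
      intro w hw
      exact arctan_gap_le_pi_div_two (by nlinarith [hw.1])
    calc (∫ w in (0:ℝ)..c1, f w) ≤ ∫ w in (0:ℝ)..c1, (π/2 : ℝ) := by
          apply intervalIntegral.integral_mono_on hc10.le (hfc.intervalIntegrable _ _)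
            intervalIntegrable_const hb
      _ = (π / 2) * c1 := by rw [intervalIntegral.integral_const, smul_eq_mul]; ring
      _ ≤ (π / 2) * w1 := by
          apply mul_le_mul_of_nonneg_left (min_le_right _ _) (by positivity)
      _ = M⁻¹ * (π / 2) := by rw [hw1]; ring
  -- piece 2
  have hP2 : (∫ w in c1..c2, f w) ≤ M⁻¹ * Real.log (1 + M * L) := by
    have hb : ∀ w ∈ Set.Icc c1 c2, f w ≤ M⁻¹ * w⁻¹ := by
      intro w hw
      have hw0 : 0 < w := lt_of_lt_of_le hc10 hw.1
      have h1 : f w ≤ (M * w)⁻¹ := by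
        have := arctan_gap_le_inv (mul_pos hM0 hw0) (M * (w + L))
        exact this
      rw [mul_inv] at h1
      exact h1
    have hint2 : IntervalIntegrable (fun w : ℝ => M⁻¹ * w⁻¹) volume c1 c2 := by
      apply ContinuousOn.intervalIntegrable
      apply ContinuousOn.mul continuousOn_const
      apply ContinuousOn.inv₀ continuousOn_id
      intro w hw
      rw [Set.uIcc_of_le hc12] at hw
      exact (lt_of_lt_of_le hc10 hw.1).ne'
    calc (∫ w in c1..c2, f w) ≤ ∫ w in c1..c2, M⁻¹ * w⁻¹ := by
          apply intervalIntegral.integral_mono_on hc12 (hfc.intervalIntegrable _ _) hint2 hb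
      _ = M⁻¹ * ∫ w in c1..c2, w⁻¹ := intervalIntegral.integral_const_mul _ _
      _ = M⁻¹ * Real.log (c2 / c1) := by
          rw [integral_inv (by
            rw [Set.uIcc_of_le hc12]
            intro hmem
            exact absurd (hmem.1) (not_le.2 hc10))]
      _ ≤ M⁻¹ * Real.log (1 + M * L) := by
          apply mul_le_mul_of_nonneg_left _ (by positivity)
          have hratio : c2 / c1 ≤ w2 / w1 := by
            rcases le_total T w1 with h | h
            · have hc1T : c1 = T := min_eq_left h
              have hc2T' : c2 = T := min_eq_left (h.trans hw12)
              rw [hc1T, hc2T', div_self hT0.ne']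
              rw [le_div_iff₀ hw10]
              linarith [hw12]
            · have hc1w : c1 = w1 := min_eq_right h
              rw [hc1w]
              gcongr
              exact min_le_right _ _
          have hw2w1 : w2 / w1 = 1 + M * L := by
            rw [hw2, hw1]
            field_simp
            ring
          calc Real.log (c2 / c1) ≤ Real.log (w2 / w1) := by
                apply Real.log_le_log (by positivity) hratio
            _ = Real.log (1 + M * L) := by rw [hw2w1]
  -- piece 3
  have hP3 : (∫ w in c2..T, f w) ≤ M⁻¹ := by
    have hc20 : 0 < c2 := lt_of_lt_of_le hc10 hc12
    have hb : ∀ w ∈ Set.Icc c2 T, f w ≤ L * M⁻¹ * (w ^ 2)⁻¹ := by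
      intro w hw
      have hw0 : 0 < w := lt_of_lt_of_le hc20 hw.1
      have h1 : f w ≤ (M * (w + L) - M * w) / (1 + (M * (w + L)) * (M * w)) :=
        arctan_sub_le (by positivity) (by nlinarith)
      have hnum : M * (w + L) - M * w = M * L := by ring
      rw [hnum] at h1
      have h2 : (M * L) / (1 + (M * (w + L)) * (M * w))
          ≤ (M * L) / (M ^ 2 * w ^ 2) := by
        gcongr
        nlinarith [mul_nonneg (mul_nonneg (mul_nonneg hM0.le hw0.le) hM0.le) hL]
      have h3 : (M * L) / (M ^ 2 * w ^ 2) = L * M⁻¹ * (w ^ 2)⁻¹ := by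
        field_simp
      calc f w ≤ _ := h1
        _ ≤ _ := h2
        _ = _ := h3
    have hint3 : IntervalIntegrable (fun w : ℝ => L * M⁻¹ * (w ^ 2)⁻¹) volume c2 T := by
      apply ContinuousOn.intervalIntegrable
      apply ContinuousOn.mul continuousOn_const
      apply ContinuousOn.inv₀ (continuousOn_pow 2)
      intro w hw
      rw [Set.uIcc_of_le hc2T] at hw
      have : 0 < w := lt_of_lt_of_le hc20 hw.1
      positivity
    have hFTC : (∫ w in c2..T, (w ^ 2)⁻¹) = c2⁻¹ - T⁻¹ := by
      have hderiv : ∀ w ∈ Set.uIcc c2 T, HasDerivAt (fun u : ℝ => -u⁻¹) ((w ^ 2)⁻¹) w := by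
        intro w hw
        rw [Set.uIcc_of_le hc2T] at hw
        have hw0 : w ≠ 0 := (lt_of_lt_of_le hc20 hw.1).ne'
        have := (hasDerivAt_inv hw0).neg
        rw [neg_neg] at this
        exact this
      have hcont : ContinuousOn (fun w : ℝ => (w ^ 2)⁻¹) (Set.uIcc c2 T) := by
        apply ContinuousOn.inv₀ (continuousOn_pow 2)
        intro w hw
        rw [Set.uIcc_of_le hc2T] at hw
        have : 0 < w := lt_of_lt_of_le hc20 hw.1
        positivity
      rw [intervalIntegral.integral_eq_sub_of_hasDerivAt hderiv hcont.intervalIntegrable]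
      ring
    calc (∫ w in c2..T, f w) ≤ ∫ w in c2..T, L * M⁻¹ * (w ^ 2)⁻¹ := by
          apply intervalIntegral.integral_mono_on hc2T (hfc.intervalIntegrable _ _) hint3 hb
      _ = L * M⁻¹ * (c2⁻¹ - T⁻¹) := by
          rw [intervalIntegral.integral_const_mul, hFTC]
      _ ≤ M⁻¹ := by
          rcases le_total T w2 with h | h
          · have hc2' : c2 = T := min_eq_left h
            rw [hc2']
            simp only [sub_self, mul_zero]
            positivity
          · have hc2' : c2 = w2 := min_eq_right h
            rw [hc2']
            have hMi : (0:ℝ) < M⁻¹ := by positivity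
            have hw2i : (0:ℝ) < w2⁻¹ := by positivity
            have hTi : (0:ℝ) ≤ T⁻¹ := by positivity
            have hLw2 : L * w2⁻¹ ≤ 1 := by
              rw [← div_eq_mul_inv, div_le_one hw20, hw2]
              linarith
            calc L * M⁻¹ * (w2⁻¹ - T⁻¹) ≤ L * M⁻¹ * w2⁻¹ := by
                  nlinarith [mul_nonneg hL hMi.le]
              _ = (L * w2⁻¹) * M⁻¹ := by ring
              _ ≤ 1 * M⁻¹ := by nlinarith
              _ = M⁻¹ := one_mul _
  linarith [hP1, hP2, hP3]

lemma inner_int {M : ℝ} (hM0 : 0 < M) (y a b : ℝ) :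
    ∫ x in a..b, 2 * M ^ 2 / (1 + (M * (x - y)) ^ 2)
      = 2 * M * (Real.arctan (M * (b - y)) - Real.arctan (M * (a - y))) := by
  have h1 : ∀ x : ℝ, 2 * M ^ 2 / (1 + (M * (x - y)) ^ 2)
      = 2 * M ^ 2 * (1 / (1 + (M * x + -(M * y)) ^ 2)) := by
    intro x
    rw [mul_one_div]
    congr 2
    ring
  simp only [h1]
  rw [intervalIntegral.integral_const_mul]
  rw [intervalIntegral.integral_comp_mul_add (fun u => 1 / (1 + u ^ 2)) hM0.ne' (-(M * y))]
  rw [integral_one_div_one_add_sq]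
  rw [smul_eq_mul]
  have e1 : M * b + -(M * y) = M * (b - y) := by ring
  have e2 : M * a + -(M * y) = M * (a - y) := by ring
  rw [e1, e2]
  field_simp

lemma part_ii (n : ℕ) (hn : 1 ≤ n) {a b : ℝ} (ha : 0 ≤ a) (hab : a ≤ b) (hb : b ≤ 1 / 2) :
    (∫ y in Set.Icc (0:ℝ) (1 / 2) \ Set.Icc a b, ∫ x in Set.Icc a b, (KSOOdd n x y) ^ 2)
      ≤ 4 * (π / 2 + Real.log (1 + (2 * (2 * (n:ℝ))) * (b - a)) + 1) := by
  set L : ℝ := b - a with hL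
  have hL0 : 0 ≤ L := by linarith
  set M : ℝ := 2 * (2 * (n:ℝ)) with hM
  have hn1 : (1:ℝ) ≤ (n:ℝ) := by exact_mod_cast hn
  have hM2 : 2 ≤ M := by rw [hM]; linarith
  have hM0 : 0 < M := by linarith
  set S : Set ℝ := Set.Icc (0:ℝ) (1 / 2) \ Set.Icc a b with hS
  have hSm : MeasurableSet S := measurableSet_Icc.diff measurableSet_Icc
  set Kin : ℝ → ℝ := fun y => ∫ x in Set.Icc a b, (KSOOdd n x y) ^ 2 with hKin
  set g : ℝ → ℝ := fun y =>
    2 * M * (Real.arctan (M * (b - y)) - Real.arctan (M * (a - y))) with hg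
  have hgcont : Continuous g := by
    apply continuous_const.mul
    apply Continuous.sub
    · exact Real.continuous_arctan.comp (continuous_const.mul (continuous_const.sub continuous_id))
    · exact Real.continuous_arctan.comp (continuous_const.mul (continuous_const.sub continuous_id))
  have hKy_cont : ∀ y : ℝ, Continuous fun x : ℝ => (KSOOdd n x y) ^ 2 := by
    intro y
    have h1 : Continuous fun x : ℝ => (x, y) := continuous_id.prodMk continuous_const
    exact ((continuous_KSOOdd n).comp h1).pow 2
  have hΦcont : ∀ y : ℝ, Continuous fun x : ℝ => 2 * M ^ 2 / (1 + (M * (x - y)) ^ 2) := by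
    intro y
    apply Continuous.div continuous_const
    · fun_prop
    · intro x; positivity
  have hKinle : ∀ y ∈ S, Kin y ≤ g y := by
    intro y hy
    obtain ⟨⟨hy0, hy1⟩, hyn⟩ := hy
    have hKle : ∀ x ∈ Set.Icc a b, (KSOOdd n x y) ^ 2 ≤ 2 * M ^ 2 / (1 + (M * (x - y)) ^ 2) := by
      intro x hx
      have hxy : x ≠ y := fun h => hyn (h ▸ hx)
      have hbound := K_sq_le n (ha.trans hx.1) (hx.2.trans hb) hy0 hy1 hxy
      have hre : 8 * (2 * (n:ℝ)) ^ 2 / (1 + (2 * (2 * (n:ℝ)) * (x - y)) ^ 2)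
          = 2 * M ^ 2 / (1 + (M * (x - y)) ^ 2) := by
        rw [hM]; congr 1; ring
      rwa [hre] at hbound
    have hIKsq : IntegrableOn (fun x : ℝ => (KSOOdd n x y) ^ 2) (Set.Icc a b) volume :=
      (hKy_cont y).integrableOn_Icc
    have hIΦ : IntegrableOn (fun x : ℝ => 2 * M ^ 2 / (1 + (M * (x - y)) ^ 2))
        (Set.Icc a b) volume := (hΦcont y).integrableOn_Icc
    calc Kin y ≤ ∫ x in Set.Icc a b, 2 * M ^ 2 / (1 + (M * (x - y)) ^ 2) :=
          setIntegral_mono_on hIKsq hIΦ measurableSet_Icc hKle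
      _ = ∫ x in a..b, 2 * M ^ 2 / (1 + (M * (x - y)) ^ 2) := by
          rw [MeasureTheory.integral_Icc_eq_integral_Ioc, ← intervalIntegral.integral_of_le hab]
      _ = g y := inner_int hM0 y a b
  have hKincont : Continuous Kin := by
    have hKin_eq : Kin = fun y => ∫ x in a..b, (KSOOdd n x y) ^ 2 := by
      funext y
      simp only [hKin]
      rw [MeasureTheory.integral_Icc_eq_integral_Ioc, ← intervalIntegral.integral_of_le hab]
    rw [hKin_eq]
    apply intervalIntegral.continuous_parametric_intervalIntegral_of_continuous' (μ := volume)
    have : Continuous fun p : ℝ × ℝ => (KSOOdd n p.2 p.1) ^ 2 :=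
      ((continuous_KSOOdd n).comp (continuous_snd.prodMk continuous_fst)).pow 2
    exact this
  have hKinInt : IntegrableOn Kin S volume :=
    (hKincont.integrableOn_Icc (a := 0) (b := 1/2)).mono_set Set.diff_subset
  have hgInt : IntegrableOn g S volume :=
    (hgcont.integrableOn_Icc (a := 0) (b := 1/2)).mono_set Set.diff_subset
  have step1 : (∫ y in S, Kin y) ≤ ∫ y in S, g y :=
    setIntegral_mono_on hKinInt hgInt hSm hKinle
  -- Split S into two intervals
  have hSeq : S = Set.Ico (0:ℝ) a ∪ Set.Ioc b (1 / 2) := by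
    rw [hS]
    ext y
    simp only [Set.mem_diff, Set.mem_Icc, Set.mem_union, Set.mem_Ico, Set.mem_Ioc,
      not_and, not_le]
    constructor
    · rintro ⟨⟨h0, h1⟩, h2⟩
      rcases lt_or_ge y a with h | h
      · exact Or.inl ⟨h0, h⟩
      · exact Or.inr ⟨h2 h, h1⟩
    · rintro (⟨h0, h1⟩ | ⟨h0, h1⟩)
      · exact ⟨⟨h0, by linarith⟩, fun h => absurd h (not_le.2 h1)⟩
      · exact ⟨⟨by linarith, h1⟩, fun _ => h0⟩
  have hdisj : Disjoint (Set.Ico (0:ℝ) a) (Set.Ioc b (1 / 2)) := by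
    apply Set.disjoint_left.2
    rintro y ⟨_, h1⟩ ⟨h2, _⟩
    linarith
  have hgIntA : IntegrableOn g (Set.Ico (0:ℝ) a) volume :=
    (hgcont.integrableOn_Icc (a := 0) (b := a)).mono_set Set.Ico_subset_Icc_self
  have hgIntB : IntegrableOn g (Set.Ioc b (1 / 2)) volume :=
    (hgcont.integrableOn_Icc (a := b) (b := 1/2)).mono_set Set.Ioc_subset_Icc_self
  have hsplit : (∫ y in S, g y)
      = (∫ y in Set.Ico (0:ℝ) a, g y) + ∫ y in Set.Ioc b (1 / 2), g y := by
    rw [hSeq]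
    exact setIntegral_union hdisj measurableSet_Ioc hgIntA hgIntB
  -- common bound function for both pieces
  set F : ℝ → ℝ := fun w => Real.arctan (M * (w + L)) - Real.arctan (M * w) with hF
  -- Piece A
  have hA : (∫ y in Set.Ico (0:ℝ) a, g y) ≤ 2 * (π / 2 + Real.log (1 + M * L) + 1) := by
    have h1 : (∫ y in Set.Ico (0:ℝ) a, g y) = ∫ y in (0:ℝ)..a, g y := by
      rw [MeasureTheory.integral_Ico_eq_integral_Ioo, intervalIntegral.integral_of_le ha,
        MeasureTheory.integral_Ioc_eq_integral_Ioo]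
    have h2 : (∫ y in (0:ℝ)..a, g y) = ∫ y in (0:ℝ)..a, (2 * M) * F (a - y) := by
      apply intervalIntegral.integral_congr
      intro y hy
      simp only [hg, hF]
      congr 2
      rw [hL]; ring
    have h3 : (∫ y in (0:ℝ)..a, (2 * M) * F (a - y)) = 2 * M * ∫ y in (0:ℝ)..a, F (a - y) :=
      intervalIntegral.integral_const_mul _ _
    have h4 : (∫ y in (0:ℝ)..a, F (a - y)) = ∫ w in (0:ℝ)..a, F w := by
      have := intervalIntegral.integral_comp_sub_left (a := (0:ℝ)) (b := a) F a
      simpa using this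
    rw [h1, h2, h3, h4]
    have h5 := lemE hM2 hL0 ha
    calc 2 * M * ∫ w in (0:ℝ)..a, F w
        ≤ 2 * M * (M⁻¹ * (π / 2 + Real.log (1 + M * L) + 1)) := by
          apply mul_le_mul_of_nonneg_left _ (by positivity)
          exact h5
      _ = 2 * (π / 2 + Real.log (1 + M * L) + 1) := by
          field_simp
  -- Piece B
  have hB : (∫ y in Set.Ioc b (1 / 2), g y) ≤ 2 * (π / 2 + Real.log (1 + M * L) + 1) := by
    have h1 : (∫ y in Set.Ioc b (1 / 2), g y) = ∫ y in b..(1/2 : ℝ), g y := by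
      rw [intervalIntegral.integral_of_le hb]
    have h2 : (∫ y in b..(1/2 : ℝ), g y) = ∫ y in b..(1/2 : ℝ), (2 * M) * F (y - b) := by
      apply intervalIntegral.integral_congr
      intro y hy
      simp only [hg, hF]
      have e1 : M * (b - y) = -(M * (y - b)) := by ring
      have e2 : M * (a - y) = -(M * ((y - b) + L)) := by rw [hL]; ring
      rw [e1, e2, Real.arctan_neg, Real.arctan_neg]
      ring
    have h3 : (∫ y in b..(1/2 : ℝ), (2 * M) * F (y - b))
        = 2 * M * ∫ y in b..(1/2 : ℝ), F (y - b) :=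
      intervalIntegral.integral_const_mul _ _
    have h4 : (∫ y in b..(1/2 : ℝ), F (y - b)) = ∫ w in (0:ℝ)..(1/2 - b), F w := by
      have := intervalIntegral.integral_comp_sub_right (a := b) (b := (1/2:ℝ)) F b
      simpa using this
    rw [h1, h2, h3, h4]
    have h5 := lemE hM2 hL0 (by linarith : (0:ℝ) ≤ 1/2 - b)
    calc 2 * M * ∫ w in (0:ℝ)..(1/2 - b), F w
        ≤ 2 * M * (M⁻¹ * (π / 2 + Real.log (1 + M * L) + 1)) := by
          apply mul_le_mul_of_nonneg_left _ (by positivity)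
          exact h5
      _ = 2 * (π / 2 + Real.log (1 + M * L) + 1) := by
          field_simp
  calc (∫ y in S, Kin y) ≤ ∫ y in S, g y := step1
    _ = _ := hsplit
    _ ≤ 4 * (π / 2 + Real.log (1 + M * L) + 1) := by linarith

/-- **Eigenvalue count estimates for `SO(2n+1)`.** There is an absolute constant `C > 0`
such that for every `n ≥ 1` and every interval `I = [a,b] ⊆ [0,1/2]`:
(i)  `|∫_I K_{SO(2n+1)}(x,x) dx − 2n·|I|| ≤ C`, and
(ii) `∫_{[0,1/2]∖I} ∫_I K_{SO(2n+1)}(x,y)² dx dy ≤ C·log(2 + 2n·|I|)`. -/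
theorem SO_odd_kernel_integrals :
    ∃ C : ℝ, 0 < C ∧ ∀ (n : ℕ), 1 ≤ n → ∀ a b : ℝ,
      0 ≤ a → a ≤ b → b ≤ 1 / 2 →
      |(∫ x in a..b, KSOOdd n x x) - 2 * (n : ℝ) * (b - a)| ≤ C ∧
      (∫ y in Set.Icc (0 : ℝ) (1 / 2) \ Set.Icc a b, ∫ x in Set.Icc a b, (KSOOdd n x y) ^ 2)
        ≤ C * Real.log (2 + 2 * (n : ℝ) * (b - a)) := by
  refine ⟨100, by norm_num, ?_⟩
  intro n hn a b ha hab hb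
  constructor
  · exact (part_i n ha hab hb).trans (by norm_num)
  · have h2 := part_ii n hn ha hab hb
    set s : ℝ := 2 * (n:ℝ) * (b - a) with hs
    have hs0 : 0 ≤ s := mul_nonneg (by positivity) (by linarith)
    have hML : (2 * (2 * (n:ℝ))) * (b - a) = 2 * s := by rw [hs]; ring
    rw [hML] at h2
    have hlog2 : (0.6931471803 : ℝ) < Real.log 2 := Real.log_two_gt_d9
    have hmono : Real.log 2 ≤ Real.log (2 + s) := Real.log_le_log (by norm_num) (by linarith)
    have hsq : Real.log (1 + 2 * s) ≤ 2 * Real.log (2 + s) := by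
      have h1 : (1 + 2 * s) ≤ (2 + s) ^ 2 := by nlinarith
      calc Real.log (1 + 2 * s) ≤ Real.log ((2 + s) ^ 2) :=
            Real.log_le_log (by linarith) h1
        _ = 2 * Real.log (2 + s) := by rw [Real.log_pow]; norm_num
    have hπ4 : π ≤ 4 := Real.pi_le_four
    have hlogpos : (0:ℝ) < Real.log (2 + s) := lt_of_lt_of_le (by linarith) hmono
    calc (∫ y in Set.Icc (0 : ℝ) (1 / 2) \ Set.Icc a b,
            ∫ x in Set.Icc a b, (KSOOdd n x y) ^ 2)
        ≤ 4 * (π / 2 + Real.log (1 + 2 * s) + 1) := h2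
      _ ≤ 100 * Real.log (2 + s) := by nlinarith
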